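/- For every k ∈ (0, 1/2) and every y ∈ [0, 1], the Bernoulli reparameterized data-fit φ_{k,y} is convex on ℝ. -/

import Mathlib

open Real Set Filter
noncomputable def Abr (k y t : ℝ) : ℝ :=
  (k/(1-k) * Real.exp ((t-k)/(k*(1-k))) / (1 + k/(1-k) * Real.exp ((t-k)/(k*(1-k)))) - y) / (k*(1-k))

noncomputable def Bbr (y t : ℝ) : ℝ := (t - y)/(t*(1-t))

noncomputable def Cbr (k y t : ℝ) : ℝ :=
  ((1-k)/k * Real.exp ((t+k-1)/(k*(1-k))) / (1 + (1-k)/k * Real.exp ((t+k-1)/(k*(1-k)))) - y) / (k*(1-k))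

noncomputable def fp (k y t : ℝ) : ℝ :=
  if t ≤ k then Abr k y t else if t ≤ 1-k then Bbr y t else Cbr k y t

noncomputable def φfun (k y : ℝ) : ℝ → ℝ := fun θ : ℝ =>
      if θ ≤ k then
        Real.log (1 + (k / (1 - k)) * Real.exp ((θ - k) / (k * (1 - k))))
          - y * ((θ - k) / (k * (1 - k)) + Real.log (k / (1 - k)))
      else if θ ≤ 1 - k then
        -Real.log (1 - θ) - y * Real.log (θ / (1 - θ))
      else
        Real.log (1 + ((1 - k) / k) * Real.exp ((θ + k - 1) / (k * (1 - k))))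
          - y * ((θ + k - 1) / (k * (1 - k)) + Real.log ((1 - k) / k))

section Aux
variable {k y : ℝ}

lemma hasDerivAt_g1 (hk0 : 0 < k) (hk1 : k < 1/2) (t : ℝ) :
    HasDerivAt (fun θ : ℝ => Real.log (1 + (k / (1 - k)) * Real.exp ((θ - k) / (k * (1 - k))))
      - y * ((θ - k) / (k * (1 - k)) + Real.log (k / (1 - k)))) (Abr k y t) t := by
  have hk1' : (0:ℝ) < 1 - k := by linarith
  have hK : (0:ℝ) < k * (1-k) := by positivity
  have hu : HasDerivAt (fun θ : ℝ => (θ - k) / (k * (1-k))) (1 / (k*(1-k))) t := by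
    simpa using ((hasDerivAt_id t).sub_const k).div_const (k*(1-k))
  have he := hu.exp
  have hin := (he.const_mul (k/(1-k))).const_add 1
  have hpos : (0:ℝ) < 1 + k/(1-k) * Real.exp ((t-k)/(k*(1-k))) := by positivity
  have hlog := hin.log (ne_of_gt hpos)
  have hlin : HasDerivAt (fun θ : ℝ => y * ((θ - k) / (k * (1 - k)) + Real.log (k / (1 - k))))
      (y * (1/(k*(1-k)))) t := by
    simpa using ((hu.add_const (Real.log (k/(1-k)))).const_mul y)
  have := hlog.sub hlin
  refine this.congr_deriv ?_
  unfold Abr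
  field_simp

lemma hasDerivAt_g2 {t : ℝ} (ht0 : 0 < t) (ht1 : t < 1) :
    HasDerivAt (fun θ : ℝ => -Real.log (1 - θ) - y * Real.log (θ / (1 - θ))) (Bbr y t) t := by
  have h1t : (1:ℝ) - t ≠ 0 := by linarith
  have ht : t ≠ 0 := ne_of_gt ht0
  have ha : HasDerivAt (fun θ : ℝ => (1:ℝ) - θ) (-1) t := by
    simpa using (hasDerivAt_id t).const_sub 1
  have hlog1 := (ha.log h1t).neg
  have hq : HasDerivAt (fun θ : ℝ => θ / (1 - θ)) ((1*(1-t) - t*(-1))/(1-t)^2) t :=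
    (hasDerivAt_id t).div ha h1t
  have hne : t / (1-t) ≠ 0 := by positivity
  have hlog2 := (hq.log hne).const_mul y
  have := hlog1.sub hlog2
  refine this.congr_deriv ?_
  unfold Bbr
  field_simp
  ring

lemma hasDerivAt_g3 (hk0 : 0 < k) (hk1 : k < 1/2) (t : ℝ) :
    HasDerivAt (fun θ : ℝ => Real.log (1 + ((1 - k) / k) * Real.exp ((θ + k - 1) / (k * (1 - k))))
      - y * ((θ + k - 1) / (k * (1 - k)) + Real.log ((1 - k) / k))) (Cbr k y t) t := by
  have hk1' : (0:ℝ) < 1 - k := by linarith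
  have hK : (0:ℝ) < k * (1-k) := by positivity
  have hu : HasDerivAt (fun θ : ℝ => (θ + k - 1) / (k * (1-k))) (1 / (k*(1-k))) t := by
    simpa using (((hasDerivAt_id t).add_const k).sub_const 1).div_const (k*(1-k))
  have he := hu.exp
  have hin := (he.const_mul ((1-k)/k)).const_add 1
  have hpos : (0:ℝ) < 1 + (1-k)/k * Real.exp ((t+k-1)/(k*(1-k))) := by positivity
  have hlog := hin.log (ne_of_gt hpos)
  have hlin : HasDerivAt (fun θ : ℝ => y * ((θ + k - 1) / (k * (1 - k)) + Real.log ((1 - k) / k)))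
      (y * (1/(k*(1-k)))) t := by
    simpa using ((hu.add_const (Real.log ((1-k)/k))).const_mul y)
  have := hlog.sub hlin
  refine this.congr_deriv ?_
  unfold Cbr
  field_simp

-- boundary equalities for the derivative
lemma AB_eq (hk0 : 0 < k) (hk1 : k < 1/2) : Abr k y k = Bbr y k := by
  have hk1' : (0:ℝ) < 1 - k := by linarith
  unfold Abr Bbr
  rw [show (k - k)/(k*(1-k)) = 0 by simp, Real.exp_zero, mul_one]
  rw [show 1 + k/(1-k) = (1-k)⁻¹ by field_simp; ring]
  field_simp

lemma BC_eq (hk0 : 0 < k) (hk1 : k < 1/2) : Bbr y (1-k) = Cbr k y (1-k) := by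
  have hk1' : (0:ℝ) < 1 - k := by linarith
  unfold Bbr Cbr
  rw [show (1 - k + k - 1)/(k*(1-k)) = 0 by simp, Real.exp_zero, mul_one]
  rw [show (1:ℝ) - (1-k) = k by ring, show 1 + (1-k)/k = k⁻¹ by field_simp; ring]
  rw [div_inv_eq_mul, div_mul_cancel₀ _ (ne_of_gt hk0)]
  ring

-- boundary equalities for function values
lemma g12_eq (hk0 : 0 < k) (hk1 : k < 1/2) :
    Real.log (1 + (k / (1 - k)) * Real.exp ((k - k) / (k * (1 - k))))
      - y * ((k - k) / (k * (1 - k)) + Real.log (k / (1 - k)))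
    = -Real.log (1 - k) - y * Real.log (k / (1 - k)) := by
  have hk1' : (0:ℝ) < 1 - k := by linarith
  rw [show (k - k)/(k*(1-k)) = 0 by simp, Real.exp_zero, mul_one]
  rw [show 1 + k/(1-k) = (1-k)⁻¹ by field_simp; ring, Real.log_inv]
  ring

lemma g23_eq (hk0 : 0 < k) (hk1 : k < 1/2) :
    -Real.log (1 - (1-k)) - y * Real.log ((1-k) / (1 - (1-k)))
    = Real.log (1 + ((1 - k) / k) * Real.exp (((1-k) + k - 1) / (k * (1 - k))))
      - y * (((1-k) + k - 1) / (k * (1 - k)) + Real.log ((1 - k) / k)) := by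
  have hk1' : (0:ℝ) < 1 - k := by linarith
  rw [show (1 - k + k - 1)/(k*(1-k)) = 0 by simp, Real.exp_zero, mul_one]
  rw [show 1 + (1-k)/k = k⁻¹ by field_simp; ring, Real.log_inv]
  rw [show (1:ℝ) - (1-k) = k by ring]
  ring

-- monotonicity of branches
lemma monoA (hk0 : 0 < k) (hk1 : k < 1/2) {x z : ℝ} (hxz : x ≤ z) :
    Abr k y x ≤ Abr k y z := by
  have hk1' : (0:ℝ) < 1 - k := by linarith
  have hK : (0:ℝ) < k * (1-k) := by positivity
  have hc : (0:ℝ) < k / (1-k) := by positivity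
  unfold Abr
  have hab : Real.exp ((x-k)/(k*(1-k))) ≤ Real.exp ((z-k)/(k*(1-k))) := by
    apply Real.exp_le_exp.2
    gcongr
  set a := Real.exp ((x-k)/(k*(1-k))) with ha'
  set b := Real.exp ((z-k)/(k*(1-k))) with hb'
  have ha : 0 < a := Real.exp_pos _
  have hb : 0 < b := Real.exp_pos _
  have key : k/(1-k) * a / (1 + k/(1-k) * a) ≤ k/(1-k) * b / (1 + k/(1-k) * b) := by
    rw [div_le_div_iff₀ (by positivity) (by positivity)]
    nlinarith [mul_pos hc ha, mul_pos hc hb, mul_le_mul_of_nonneg_left hab hc.le]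
  gcongr

lemma monoB (hy0 : 0 ≤ y) (hy1 : y ≤ 1) {x z : ℝ} (hx0 : 0 < x) (hxz : x ≤ z) (hz1 : z < 1) :
    Bbr y x ≤ Bbr y z := by
  have hz0 : 0 < z := lt_of_lt_of_le hx0 hxz
  have hx1 : x < 1 := lt_of_le_of_lt hxz hz1
  unfold Bbr
  rw [div_le_div_iff₀ (by nlinarith) (by nlinarith)]
  nlinarith [mul_nonneg (mul_nonneg (mul_nonneg hy0 (by linarith : (0:ℝ) ≤ 1 - x)) (by linarith : (0:ℝ) ≤ 1 - z)) (by linarith : (0:ℝ) ≤ z - x),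
    mul_nonneg (mul_nonneg (mul_nonneg (by linarith : (0:ℝ) ≤ 1 - y) hx0.le) hz0.le) (by linarith : (0:ℝ) ≤ z - x)]

lemma monoC (hk0 : 0 < k) (hk1 : k < 1/2) {x z : ℝ} (hxz : x ≤ z) :
    Cbr k y x ≤ Cbr k y z := by
  have hk1' : (0:ℝ) < 1 - k := by linarith
  have hK : (0:ℝ) < k * (1-k) := by positivity
  have hc : (0:ℝ) < (1-k) / k := by positivity
  unfold Cbr
  have hab : Real.exp ((x+k-1)/(k*(1-k))) ≤ Real.exp ((z+k-1)/(k*(1-k))) := by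
    apply Real.exp_le_exp.2
    gcongr
  set a := Real.exp ((x+k-1)/(k*(1-k))) with ha'
  set b := Real.exp ((z+k-1)/(k*(1-k))) with hb'
  have ha : 0 < a := Real.exp_pos _
  have hb : 0 < b := Real.exp_pos _
  have key : (1-k)/k * a / (1 + (1-k)/k * a) ≤ (1-k)/k * b / (1 + (1-k)/k * b) := by
    rw [div_le_div_iff₀ (by positivity) (by positivity)]
    nlinarith [mul_pos hc ha, mul_pos hc hb, mul_le_mul_of_nonneg_left hab hc.le]
  gcongr

end Aux

theorem bernoulli_main (k : ℝ) (hk0 : 0 < k) (hk1 : k < 1/2) (y : ℝ)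
    (hy0 : 0 ≤ y) (hy1 : y ≤ 1) : ConvexOn ℝ Set.univ (φfun k y) := by
  have hk1' : (0:ℝ) < 1 - k := by linarith
  have hkk : k < 1 - k := by linarith
  have hk1'' : (1:ℝ) - k < 1 := by linarith
  have hD : ∀ t, HasDerivAt (φfun k y) (fp k y t) t := by
    intro t
    rcases lt_trichotomy t k with h | h | h
    · have hev : φfun k y =ᶠ[nhds t] (fun θ : ℝ =>
          Real.log (1 + (k / (1 - k)) * Real.exp ((θ - k) / (k * (1 - k))))
            - y * ((θ - k) / (k * (1 - k)) + Real.log (k / (1 - k)))) := by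
        filter_upwards [Iio_mem_nhds h] with θ hθ
        simp only [φfun]
        rw [if_pos (le_of_lt hθ)]
      have hd := (hasDerivAt_g1 (y := y) hk0 hk1 t).congr_of_eventuallyEq hev
      have hfp : fp k y t = Abr k y t := by simp [fp, h.le]
      rwa [hfp]
    · rw [h]; clear h
      have hleft : HasDerivWithinAt (φfun k y) (Abr k y k) (Iic k) k := by
        refine ((hasDerivAt_g1 (y := y) hk0 hk1 k).hasDerivWithinAt).congr ?_ ?_
        · intro θ hθ; simp only [φfun]; rw [if_pos (mem_Iic.1 hθ)]
        · simp only [φfun]; rw [if_pos le_rfl]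
      have hright : HasDerivWithinAt (φfun k y) (Abr k y k) (Ici k) k := by
        have hB := (hasDerivAt_g2 (y := y) hk0 (by linarith : k < 1)).hasDerivWithinAt (s := Ici k)
        rw [AB_eq hk0 hk1]
        refine hB.congr_of_eventuallyEq ?_ ?_
        · have hmem : Iio (1 - k) ∈ nhdsWithin k (Ici k) :=
            mem_nhdsWithin_of_mem_nhds (Iio_mem_nhds hkk)
          filter_upwards [hmem, self_mem_nhdsWithin] with θ h1 h2
          simp only [φfun]
          rcases eq_or_lt_of_le (mem_Ici.1 h2) with rfl | hlt
          · rw [if_pos le_rfl]; exact g12_eq hk0 hk1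
          · rw [if_neg (not_le.2 hlt), if_pos (le_of_lt (mem_Iio.1 h1))]
        · simp only [φfun]; rw [if_pos le_rfl]; exact g12_eq hk0 hk1
      have := hleft.union hright
      rw [Iic_union_Ici] at this
      have hd := hasDerivWithinAt_univ.1 this
      have hfp : fp k y k = Abr k y k := by simp [fp]
      rwa [hfp]
    · rcases lt_trichotomy t (1 - k) with h2 | h2 | h2
      · have hev : φfun k y =ᶠ[nhds t]
            (fun θ : ℝ => -Real.log (1 - θ) - y * Real.log (θ / (1 - θ))) := by
          filter_upwards [Ioo_mem_nhds h h2] with θ hθ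
          simp only [φfun]
          rw [if_neg (not_le.2 hθ.1), if_pos (le_of_lt hθ.2)]
        have hd := (hasDerivAt_g2 (y := y) (by linarith : (0:ℝ) < t)
          (by linarith : t < 1)).congr_of_eventuallyEq hev
        have hfp : fp k y t = Bbr y t := by simp [fp, not_le.2 h, h2.le]
        rwa [hfp]
      · rw [h2]; clear h2
        have hleft : HasDerivWithinAt (φfun k y) (Bbr y (1 - k)) (Iic (1 - k)) (1 - k) := by
          have hB := (hasDerivAt_g2 (y := y) (by linarith : (0:ℝ) < 1 - k)
            hk1'').hasDerivWithinAt (s := Iic (1 - k))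
          refine hB.congr_of_eventuallyEq ?_ ?_
          · have hmem : Ioi k ∈ nhdsWithin (1 - k) (Iic (1 - k)) :=
              mem_nhdsWithin_of_mem_nhds (Ioi_mem_nhds hkk)
            filter_upwards [hmem, self_mem_nhdsWithin] with θ h1 h2
            simp only [φfun]
            rw [if_neg (not_le.2 (mem_Ioi.1 h1)), if_pos (mem_Iic.1 h2)]
          · simp only [φfun]
            rw [if_neg (not_le.2 hkk), if_pos le_rfl]
        have hright : HasDerivWithinAt (φfun k y) (Bbr y (1 - k)) (Ici (1 - k)) (1 - k) := by
          have hC := (hasDerivAt_g3 (y := y) hk0 hk1 (1 - k)).hasDerivWithinAt (s := Ici (1 - k))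
          rw [BC_eq hk0 hk1]
          refine hC.congr_of_eventuallyEq ?_ ?_
          · filter_upwards [self_mem_nhdsWithin] with θ hθ
            simp only [φfun]
            rcases eq_or_lt_of_le (mem_Ici.1 hθ) with rfl | hlt
            · rw [if_neg (not_le.2 hkk), if_pos le_rfl]
              exact g23_eq hk0 hk1
            · rw [if_neg (by push_neg; linarith), if_neg (not_le.2 hlt)]
          · simp only [φfun]
            rw [if_neg (not_le.2 hkk), if_pos le_rfl]
            exact g23_eq hk0 hk1
        have := hleft.union hright
        rw [Iic_union_Ici] at this
        have hd := hasDerivWithinAt_univ.1 this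
        have hfp : fp k y (1 - k) = Bbr y (1 - k) := by
          simp [fp, not_le.2 hkk]
        rwa [hfp]
      · have hev : φfun k y =ᶠ[nhds t] (fun θ : ℝ =>
            Real.log (1 + ((1 - k) / k) * Real.exp ((θ + k - 1) / (k * (1 - k))))
              - y * ((θ + k - 1) / (k * (1 - k)) + Real.log ((1 - k) / k))) := by
          filter_upwards [Ioi_mem_nhds h2] with θ hθ
          simp only [φfun]
          rw [if_neg (by push_neg; linarith [mem_Ioi.1 hθ]), if_neg (not_le.2 hθ)]
        have hd := (hasDerivAt_g3 (y := y) hk0 hk1 t).congr_of_eventuallyEq hev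
        have hfp : fp k y t = Cbr k y t := by
          simp [fp, not_le.2 h, not_le.2 h2]
        rwa [hfp]
  have hmono : Monotone (fp k y) := by
    intro x z hxz
    rcases le_or_gt x k with hx | hx
    · rcases le_or_gt z k with hz | hz
      · simp only [fp, if_pos hx, if_pos hz]
        exact monoA hk0 hk1 hxz
      · rcases le_or_gt z (1 - k) with hz2 | hz2
        · simp only [fp, if_pos hx, if_neg (not_le.2 hz), if_pos hz2]
          calc Abr k y x ≤ Abr k y k := monoA hk0 hk1 hx
            _ = Bbr y k := AB_eq hk0 hk1
            _ ≤ Bbr y z := monoB hy0 hy1 hk0 hz.le (by linarith)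
        · simp only [fp, if_pos hx, if_neg (not_le.2 hz), if_neg (not_le.2 hz2)]
          calc Abr k y x ≤ Abr k y k := monoA hk0 hk1 hx
            _ = Bbr y k := AB_eq hk0 hk1
            _ ≤ Bbr y (1 - k) := monoB hy0 hy1 hk0 hkk.le hk1''
            _ = Cbr k y (1 - k) := BC_eq hk0 hk1
            _ ≤ Cbr k y z := monoC hk0 hk1 hz2.le
    · have hzk : ¬ z ≤ k := not_le.2 (lt_of_lt_of_le hx hxz)
      rcases le_or_gt x (1 - k) with hx2 | hx2
      · rcases le_or_gt z (1 - k) with hz2 | hz2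
        · simp only [fp, if_neg (not_le.2 hx), if_neg hzk, if_pos hx2, if_pos hz2]
          exact monoB hy0 hy1 (by linarith) hxz (by linarith)
        · simp only [fp, if_neg (not_le.2 hx), if_neg hzk, if_pos hx2, if_neg (not_le.2 hz2)]
          calc Bbr y x ≤ Bbr y (1 - k) := monoB hy0 hy1 (by linarith) hx2 hk1''
            _ = Cbr k y (1 - k) := BC_eq hk0 hk1
            _ ≤ Cbr k y z := monoC hk0 hk1 hz2.le
      · have hz2 : ¬ z ≤ 1 - k := not_le.2 (lt_of_lt_of_le hx2 hxz)
        simp only [fp, if_neg (not_le.2 hx), if_neg hzk, if_neg (not_le.2 hx2), if_neg hz2]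
        exact monoC hk0 hk1 hxz
  have hdiff : Differentiable ℝ (φfun k y) := fun t => (hD t).differentiableAt
  have hderiv : deriv (φfun k y) = fp k y := funext fun t => (hD t).deriv
  have hm : Monotone (deriv (φfun k y)) := hderiv ▸ hmono
  exact hm.convexOn_univ_of_deriv hdiff

theorem bernoulli_reparam_datafit_convex
    (k : ℝ) (hk0 : 0 < k) (hk1 : k < 1/2) (y : ℝ) (hy0 : 0 ≤ y) (hy1 : y ≤ 1) :
    ConvexOn ℝ Set.univ (fun θ : ℝ =>
      if θ ≤ k then
        Real.log (1 + (k / (1 - k)) * Real.exp ((θ - k) / (k * (1 - k))))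
          - y * ((θ - k) / (k * (1 - k)) + Real.log (k / (1 - k)))
      else if θ ≤ 1 - k then
        -Real.log (1 - θ) - y * Real.log (θ / (1 - θ))
      else
        Real.log (1 + ((1 - k) / k) * Real.exp ((θ + k - 1) / (k * (1 - k))))
          - y * ((θ + k - 1) / (k * (1 - k)) + Real.log ((1 - k) / k))) :=
  bernoulli_main k hk0 hk1 y hy0 hy1
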